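/- If X is a Benford random variable, then the correlation between D(X) and ⟨S(X)⟩ equals (45C − Var[D(X)] − 9C·E[D(X)]) / √(Var[D(X)]·(Var[D(X)] + 18C·E[D(X)] − 81C(C + 1/2))), where C = log₁₀ e; in particular this correlation is strictly positive. -/

import Mathlib

open MeasureTheory Real Set
open scoped NNReal ENNReal

namespace BenfordAux

lemma pieceEval (a : ℝ) (ha : 1 ≤ a) (f : ℝ → ℝ) (α β γ : ℝ)
    (hfe : ∀ x, a < x → x < a + 1 → f x = α / x + β + γ * x) :
    ∫ x in a..(a+1), f x
      = α * (Real.log (a+1) - Real.log a) + β + γ * ((a+1)^2 - a^2) / 2 := by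
  have hpos : ∀ x ∈ Set.uIcc a (a+1), (0:ℝ) < x := by
    intro x hx
    rw [Set.uIcc_of_le (by linarith)] at hx
    linarith [hx.1]
  have hcong : ∫ x in a..(a+1), f x = ∫ x in a..(a+1), (α / x + β + γ * x) := by
    apply intervalIntegral.integral_congr_ae
    have h : ∀ᵐ x : ℝ, x ≠ a + 1 := by
      filter_upwards [compl_mem_ae_iff.2 (measure_singleton (a+1))] with x hx
      simpa using hx
    filter_upwards [h] with x hx hmem
    rw [Set.uIoc_of_le (by linarith : a ≤ a+1)] at hmem
    exact hfe x hmem.1 (lt_of_le_of_ne hmem.2 hx)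
  rw [hcong]
  have hint : IntervalIntegrable (fun x => α / x + β + γ * x) volume a (a+1) := by
    apply ContinuousOn.intervalIntegrable
    apply ContinuousOn.add
    apply ContinuousOn.add
    · exact continuousOn_const.div continuousOn_id (fun x hx => (hpos x hx).ne')
    · exact continuousOn_const
    · exact continuousOn_const.mul continuousOn_id
  have hder : ∀ x ∈ Set.uIcc a (a+1),
      HasDerivAt (fun x => α * Real.log x + β * x + γ * x^2 / 2) (α / x + β + γ * x) x := by
    intro x hx
    have hx0 : x ≠ 0 := (hpos x hx).ne'
    have hlog := (Real.hasDerivAt_log hx0).const_mul α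
    have hb : HasDerivAt (fun x : ℝ => β * x) β x := by
      simpa using (hasDerivAt_id x).const_mul β
    have hx2 : HasDerivAt (fun x : ℝ => γ * x ^ 2 / 2) (γ * x) x := by
      have h2 := ((hasDerivAt_pow 2 x).const_mul γ).div_const 2
      refine h2.congr_deriv ?_
      push_cast; ring
    have hsum := (hlog.add hb).add hx2
    exact hsum.congr_deriv (by rw [div_eq_mul_inv])
  rw [intervalIntegral.integral_eq_sub_of_hasDerivAt hder hint]
  ring

lemma pieceInt (a : ℝ) (ha : 1 ≤ a) (f : ℝ → ℝ) (α β γ : ℝ)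
    (hfe : ∀ x, a < x → x < a + 1 → f x = α / x + β + γ * x) :
    IntervalIntegrable f volume a (a+1) := by
  have hpos : ∀ x ∈ Set.uIcc a (a+1), (0:ℝ) < x := by
    intro x hx
    rw [Set.uIcc_of_le (by linarith)] at hx
    linarith [hx.1]
  have hint : IntervalIntegrable (fun x => α / x + β + γ * x) volume a (a+1) := by
    apply ContinuousOn.intervalIntegrable
    apply ContinuousOn.add
    apply ContinuousOn.add
    · exact continuousOn_const.div continuousOn_id (fun x hx => (hpos x hx).ne')
    · exact continuousOn_const
    · exact continuousOn_const.mul continuousOn_id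
  rw [intervalIntegrable_iff] at hint ⊢
  apply hint.congr_fun_ae
  have h : ∀ᵐ x : ℝ, x ≠ a + 1 := by
    filter_upwards [compl_mem_ae_iff.2 (measure_singleton (a+1))] with x hx
    simpa using hx
  rw [Set.uIoc_of_le (by linarith : a ≤ a+1)]
  filter_upwards [ae_restrict_mem measurableSet_Ioc, ae_restrict_of_ae h] with x hmem hx
  exact (hfe x hmem.1 (lt_of_le_of_ne hmem.2 hx)).symm

lemma split9 (f : ℝ → ℝ)
    (hint : ∀ k : ℕ, k < 9 → IntervalIntegrable f volume ((1 + k : ℕ) : ℝ) ((1 + (k+1) : ℕ) : ℝ)) :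
    ∫ x in Set.Ico (1:ℝ) 10, f x
      = ∑ k ∈ Finset.range 9, ∫ x in ((1 + k : ℕ) : ℝ)..((1 + (k+1) : ℕ) : ℝ), f x := by
  rw [integral_Ico_eq_integral_Ioo, ← integral_Ioc_eq_integral_Ioo,
    ← intervalIntegral.integral_of_le (by norm_num : (1:ℝ) ≤ 10)]
  have hs := intervalIntegral.sum_integral_adjacent_intervals (μ := volume) (f := f)
    (a := fun k : ℕ => ((1 + k : ℕ) : ℝ)) (n := 9) hint
  rw [hs]
  norm_num

lemma cast_succ (k : ℕ) : ((1 + (k+1) : ℕ) : ℝ) = ((1 + k : ℕ) : ℝ) + 1 := by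
  push_cast; ring

lemma cast_ge_one (k : ℕ) : (1:ℝ) ≤ ((1 + k : ℕ) : ℝ) := by
  push_cast; linarith [Nat.cast_nonneg (α := ℝ) k]

lemma floor_on (k : ℕ) {x : ℝ} (h1 : ((1 + k : ℕ) : ℝ) < x) (h2 : x < ((1 + k : ℕ) : ℝ) + 1) :
    ((⌊x⌋ : ℤ) : ℝ) = ((1 + k : ℕ) : ℝ) := by
  have : ⌊x⌋ = ((1 + k : ℕ) : ℤ) := by
    rw [Int.floor_eq_iff]
    constructor <;> push_cast <;> push_cast at h1 h2 <;> linarith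
  rw [this]; push_cast; ring

lemma masterEval (f : ℝ → ℝ) (P Q R : ℕ → ℝ)
    (hfe : ∀ k : ℕ, ∀ x : ℝ, ((1 + k : ℕ) : ℝ) < x → x < ((1 + k : ℕ) : ℝ) + 1 →
        f x = P k / x + Q k + R k * x) :
    ∫ x in Set.Ico (1:ℝ) 10, f x
      = ∑ k ∈ Finset.range 9,
          (P k * (Real.log (((1 + k : ℕ) : ℝ) + 1) - Real.log ((1 + k : ℕ) : ℝ))
            + Q k + R k * ((((1 + k : ℕ) : ℝ) + 1)^2 - ((1 + k : ℕ) : ℝ)^2) / 2) := by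
  rw [split9 f (fun k hk => by
    rw [cast_succ k]
    exact pieceInt _ (cast_ge_one k) f _ _ _ (hfe k))]
  apply Finset.sum_congr rfl
  intro k hk
  rw [cast_succ k]
  exact pieceEval _ (cast_ge_one k) f _ _ _ (hfe k)

lemma log_facts :
    Real.log 1 = 0 ∧ Real.log 4 = 2 * Real.log 2 ∧ Real.log 6 = Real.log 2 + Real.log 3
      ∧ Real.log 8 = 3 * Real.log 2 ∧ Real.log 9 = 2 * Real.log 3
      ∧ Real.log 10 = Real.log 2 + Real.log 5 := by
  refine ⟨Real.log_one, ?_, ?_, ?_, ?_, ?_⟩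
  · rw [show (4:ℝ) = 2^2 by norm_num, Real.log_pow]; push_cast; ring
  · rw [show (6:ℝ) = 2*3 by norm_num, Real.log_mul (by norm_num) (by norm_num)]
  · rw [show (8:ℝ) = 2^3 by norm_num, Real.log_pow]; push_cast; ring
  · rw [show (9:ℝ) = 3^2 by norm_num, Real.log_pow]; push_cast; ring
  · rw [show (10:ℝ) = 2*5 by norm_num, Real.log_mul (by norm_num) (by norm_num)]

lemma eval1 (C : ℝ) : ∫ x in Set.Ico (1:ℝ) 10, (C / x) * ((⌊x⌋ : ℤ) : ℝ)
    = C * (2 * Real.log 2 - 4 * Real.log 3 + 8 * Real.log 5 - Real.log 7) := by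
  rw [masterEval _ (fun k => C * ((1 + k : ℕ) : ℝ)) (fun _ => 0) (fun _ => 0)
    (fun k x h1 h2 => by
      have hx0 : x ≠ 0 := by nlinarith [cast_ge_one k]
      rw [floor_on k h1 h2]; field_simp; ring)]
  obtain ⟨l1, l4, l6, l8, l9, l10⟩ := log_facts
  norm_num [Finset.sum_range_succ]
  rw [l4, l6, l8, l9, l10]
  ring

lemma eval2 (C : ℝ) : ∫ x in Set.Ico (1:ℝ) 10, (C / x) * ((⌊x⌋ : ℤ) : ℝ)^2
    = C * (8 * Real.log 2 - 50 * Real.log 3 + 72 * Real.log 5 - 13 * Real.log 7) := by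
  rw [masterEval _ (fun k => C * ((1 + k : ℕ) : ℝ)^2) (fun _ => 0) (fun _ => 0)
    (fun k x h1 h2 => by
      have hx0 : x ≠ 0 := by nlinarith [cast_ge_one k]
      rw [floor_on k h1 h2]; field_simp; ring)]
  obtain ⟨l1, l4, l6, l8, l9, l10⟩ := log_facts
  norm_num [Finset.sum_range_succ]
  rw [l4, l6, l8, l9, l10]
  ring

lemma eval3 (C : ℝ) : ∫ x in Set.Ico (1:ℝ) 10, (C / x) * Int.fract x
    = C * 9 - C * (2 * Real.log 2 - 4 * Real.log 3 + 8 * Real.log 5 - Real.log 7) := by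
  rw [masterEval _ (fun k => -(C * ((1 + k : ℕ) : ℝ))) (fun _ => C) (fun _ => 0)
    (fun k x h1 h2 => by
      have hx0 : x ≠ 0 := by nlinarith [cast_ge_one k]
      rw [← Int.self_sub_floor, floor_on k h1 h2]; field_simp; ring)]
  obtain ⟨l1, l4, l6, l8, l9, l10⟩ := log_facts
  norm_num [Finset.sum_range_succ]
  rw [l4, l6, l8, l9, l10]
  ring

lemma eval4 (C : ℝ) : ∫ x in Set.Ico (1:ℝ) 10, (C / x) * (((⌊x⌋ : ℤ) : ℝ) * Int.fract x)
    = C * 45 - C * (8 * Real.log 2 - 50 * Real.log 3 + 72 * Real.log 5 - 13 * Real.log 7) := by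
  rw [masterEval _ (fun k => -(C * ((1 + k : ℕ) : ℝ)^2)) (fun k => C * ((1 + k : ℕ) : ℝ))
    (fun _ => 0)
    (fun k x h1 h2 => by
      have hx0 : x ≠ 0 := by nlinarith [cast_ge_one k]
      rw [← Int.self_sub_floor, floor_on k h1 h2]; field_simp; ring)]
  obtain ⟨l1, l4, l6, l8, l9, l10⟩ := log_facts
  norm_num [Finset.sum_range_succ]
  rw [l4, l6, l8, l9, l10]
  ring

lemma eval5 (C : ℝ) : ∫ x in Set.Ico (1:ℝ) 10, (C / x) * (Int.fract x)^2
    = C * (8 * Real.log 2 - 50 * Real.log 3 + 72 * Real.log 5 - 13 * Real.log 7) - C * 81 / 2 := by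
  rw [masterEval _ (fun k => C * ((1 + k : ℕ) : ℝ)^2) (fun k => -(2 * C * ((1 + k : ℕ) : ℝ)))
    (fun _ => C)
    (fun k x h1 h2 => by
      have hx0 : x ≠ 0 := by nlinarith [cast_ge_one k]
      rw [← Int.self_sub_floor, floor_on k h1 h2]; field_simp; ring)]
  obtain ⟨l1, l4, l6, l8, l9, l10⟩ := log_facts
  norm_num [Finset.sum_range_succ]
  rw [l4, l6, l8, l9, l10]
  ring

lemma logg (b : ℝ) (hb : 0 < b) (k j : ℕ) :
    Real.log (b^k / 2^j) = k * Real.log b - j * Real.log 2 := by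
  rw [Real.log_div (by positivity) (by positivity), Real.log_pow, Real.log_pow]

lemma log3_bounds : (1.09861224 : ℝ) ≤ Real.log 3 ∧ Real.log 3 ≤ 1.09861234 := by
  have hx : (0:ℝ) < (3:ℝ)^53 / 2^84 := by positivity
  have h1 := Real.one_sub_inv_le_log_of_pos hx
  have h2 := Real.log_le_sub_one_of_pos hx
  rw [logg 3 (by norm_num) 53 84] at h1 h2
  norm_num at h1 h2
  constructor <;> nlinarith [Real.log_two_gt_d9, Real.log_two_lt_d9]

lemma log5_bounds : (1.6094362 : ℝ) ≤ Real.log 5 ∧ Real.log 5 ≤ 1.6094396 := by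
  have hx : (0:ℝ) < (5:ℝ)^28 / 2^65 := by positivity
  have h1 := Real.one_sub_inv_le_log_of_pos hx
  have h2 := Real.log_le_sub_one_of_pos hx
  rw [logg 5 (by norm_num) 28 65] at h1 h2
  norm_num at h1 h2
  constructor <;> nlinarith [Real.log_two_gt_d9, Real.log_two_lt_d9]

lemma log7_bounds : (1.9459094 : ℝ) ≤ Real.log 7 ∧ Real.log 7 ≤ 1.9459109 := by
  have hx : (0:ℝ) < (7:ℝ)^26 / 2^73 := by positivity
  have h1 := Real.one_sub_inv_le_log_of_pos hx
  have h2 := Real.log_le_sub_one_of_pos hx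
  rw [logg 7 (by norm_num) 26 73] at h1 h2
  norm_num at h1 h2
  constructor <;> nlinarith [Real.log_two_gt_d9, Real.log_two_lt_d9]

lemma transfer {Ω : Type*} [MeasurableSpace Ω] (μ : Measure Ω)
    [IsProbabilityMeasure μ] (S : Ω → ℝ) (hS : Measurable S)
    (hlaw : Measure.map S μ
      = (volume.restrict (Set.Ico (1 : ℝ) 10)).withDensity
          (fun u => ENNReal.ofReal (Real.logb 10 (Real.exp 1) / u)))
    (g : ℝ → ℝ) (hg : Measurable g) :
    ∫ ω, g (S ω) ∂μ
      = ∫ x in Set.Ico (1:ℝ) 10, (Real.logb 10 (Real.exp 1) / x) * g x := by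
  rw [← integral_map hS.aemeasurable hg.aestronglyMeasurable, hlaw]
  have hd : (fun u : ℝ => ENNReal.ofReal (Real.logb 10 (Real.exp 1) / u))
      = fun u : ℝ => ((Real.toNNReal (Real.logb 10 (Real.exp 1) / u) : ℝ≥0) : ℝ≥0∞) := rfl
  rw [hd, integral_withDensity_eq_integral_smul
    (by exact (measurable_const.div measurable_id).real_toNNReal) g]
  apply integral_congr_ae
  have hC0 : 0 ≤ Real.logb 10 (Real.exp 1) := by
    apply Real.logb_nonneg (by norm_num)
    exact Real.one_le_exp zero_le_one
  filter_upwards [ae_restrict_mem measurableSet_Ico] with x hx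
  have hx0 : 0 < x := lt_of_lt_of_le zero_lt_one hx.1
  have hnn : 0 ≤ Real.logb 10 (Real.exp 1) / x := div_nonneg hC0 hx0.le
  rw [NNReal.smul_def, smul_eq_mul, Real.coe_toNNReal _ hnn]


lemma pos1 (a b c d : ℝ)
    (h2l : (0.6931471803 : ℝ) < a) (h2u : a < 0.6931471808)
    (h3l : (1.09861224 : ℝ) ≤ b) (h3u : b ≤ 1.09861234)
    (h5l : (1.6094362 : ℝ) ≤ c) (h5u : c ≤ 1.6094396)
    (h7l : (1.9459094 : ℝ) ≤ d) (h7u : d ≤ 1.9459109) :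
    0 < 45*(a+c) - ((8*a - 50*b + 72*c - 13*d) * (a+c) - (2*a - 4*b + 8*c - d)^2)
        - 9*(2*a - 4*b + 8*c - d) := by
  nlinarith [sq_nonneg (2*a - 4*b + 8*c - d - 7.92143), sq_nonneg (a + c - 2.302585)]

lemma pos2 (a b c d : ℝ)
    (h2l : (0.6931471803 : ℝ) < a) (h2u : a < 0.6931471808)
    (h3l : (1.09861224 : ℝ) ≤ b) (h3u : b ≤ 1.09861234)
    (h5l : (1.6094362 : ℝ) ≤ c) (h5u : c ≤ 1.6094396)
    (h7l : (1.9459094 : ℝ) ≤ d) (h7u : d ≤ 1.9459109) :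
    0 < ((8*a - 50*b + 72*c - 13*d) * (a+c) - (2*a - 4*b + 8*c - d)^2)
        + 18*(2*a - 4*b + 8*c - d) - 81 - 81*(a+c)/2 := by
  nlinarith [sq_nonneg (2*a - 4*b + 8*c - d - 7.92143), sq_nonneg (a + c - 2.302585)]

lemma pos3 (a b c d : ℝ)
    (h2l : (0.6931471803 : ℝ) < a) (h2u : a < 0.6931471808)
    (h3l : (1.09861224 : ℝ) ≤ b) (h3u : b ≤ 1.09861234)
    (h5l : (1.6094362 : ℝ) ≤ c) (h5u : c ≤ 1.6094396)
    (h7l : (1.9459094 : ℝ) ≤ d) (h7u : d ≤ 1.9459109) :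
    0 < (8*a - 50*b + 72*c - 13*d) * (a+c) - (2*a - 4*b + 8*c - d)^2 := by
  nlinarith [sq_nonneg (2*a - 4*b + 8*c - d - 7.92143), sq_nonneg (a + c - 2.302585)]

lemma pos_cancel {x y : ℝ} (hy : 0 < y) (h : 0 < x * y) : 0 < x := by
  by_contra hx
  push_neg at hx
  nlinarith

end BenfordAux

open BenfordAux

set_option maxHeartbeats 1000000 in
theorem benford_correlation {Ω : Type*} [MeasurableSpace Ω] (μ : Measure Ω)
    [IsProbabilityMeasure μ] (S : Ω → ℝ) (hS : Measurable S)
    (hlaw : Measure.map S μ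
      = (volume.restrict (Set.Ico (1 : ℝ) 10)).withDensity
          (fun u => ENNReal.ofReal (Real.logb 10 (Real.exp 1) / u)))
    (C ED ED2 VarD cor : ℝ)
    (hC : C = Real.logb 10 (Real.exp 1))
    (hED : ED = ∫ ω, ((⌊S ω⌋ : ℝ)) ∂μ)
    (hED2 : ED2 = ∫ ω, ((⌊S ω⌋ : ℝ)) ^ 2 ∂μ)
    (hVarD : VarD = ED2 - ED ^ 2)
    (hcor : cor =
      ((∫ ω, ((⌊S ω⌋ : ℝ)) * Int.fract (S ω) ∂μ) - ED * ∫ ω, Int.fract (S ω) ∂μ)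
        / Real.sqrt (VarD *
            ((∫ ω, (Int.fract (S ω)) ^ 2 ∂μ) - (∫ ω, Int.fract (S ω) ∂μ) ^ 2))) :
    cor = (45 * C - VarD - 9 * C * ED)
        / Real.sqrt (VarD * (VarD + 18 * C * ED - 81 * C * (C + 1 / 2)))
      ∧ 0 < cor := by
  -- measurability facts
  have hm1 : Measurable fun x : ℝ => ((⌊x⌋ : ℤ) : ℝ) :=
    measurable_from_top.comp Int.measurable_floor
  have hm2 : Measurable fun x : ℝ => ((⌊x⌋ : ℤ) : ℝ)^2 := hm1.pow_const 2
  have hm3 : Measurable fun x : ℝ => Int.fract x := measurable_fract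
  have hm4 : Measurable fun x : ℝ => ((⌊x⌋ : ℤ) : ℝ) * Int.fract x := hm1.mul hm3
  have hm5 : Measurable fun x : ℝ => (Int.fract x)^2 := hm3.pow_const 2
  -- abbreviations
  set l2 := Real.log 2 with hl2
  set l3 := Real.log 3 with hl3
  set l5 := Real.log 5 with hl5
  set l7 := Real.log 7 with hl7
  obtain ⟨_, _, _, _, _, hlog10⟩ := log_facts
  have hLpos : 0 < l2 + l5 := by
    rw [← hlog10]
    exact Real.log_pos (by norm_num)
  have hC' : C = (l2 + l5)⁻¹ := by
    rw [hC, Real.logb, Real.log_exp, hlog10]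
    exact one_div _
  -- transfer the five integrals
  have T1 : ∫ ω, ((⌊S ω⌋ : ℝ)) ∂μ
      = ∫ x in Set.Ico (1:ℝ) 10, (C / x) * ((⌊x⌋ : ℤ) : ℝ) := by
    rw [hC]; exact transfer μ S hS hlaw _ hm1
  have T2 : ∫ ω, ((⌊S ω⌋ : ℝ))^2 ∂μ
      = ∫ x in Set.Ico (1:ℝ) 10, (C / x) * ((⌊x⌋ : ℤ) : ℝ)^2 := by
    rw [hC]; exact transfer μ S hS hlaw _ hm2
  have T3 : ∫ ω, Int.fract (S ω) ∂μ
      = ∫ x in Set.Ico (1:ℝ) 10, (C / x) * Int.fract x := by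
    rw [hC]; exact transfer μ S hS hlaw _ hm3
  have T4 : ∫ ω, ((⌊S ω⌋ : ℝ)) * Int.fract (S ω) ∂μ
      = ∫ x in Set.Ico (1:ℝ) 10, (C / x) * (((⌊x⌋ : ℤ) : ℝ) * Int.fract x) := by
    rw [hC]; exact transfer μ S hS hlaw _ hm4
  have T5 : ∫ ω, (Int.fract (S ω))^2 ∂μ
      = ∫ x in Set.Ico (1:ℝ) 10, (C / x) * (Int.fract x)^2 := by
    rw [hC]; exact transfer μ S hS hlaw _ hm5
  -- closed forms
  have hED' : ED = C * (2*l2 - 4*l3 + 8*l5 - l7) := by rw [hED, T1, eval1]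
  have hED2' : ED2 = C * (8*l2 - 50*l3 + 72*l5 - 13*l7) := by rw [hED2, T2, eval2]
  have hfr : ∫ ω, Int.fract (S ω) ∂μ = 9*C - ED := by
    rw [T3, eval3, hED']; ring
  have hDfr : ∫ ω, ((⌊S ω⌋ : ℝ)) * Int.fract (S ω) ∂μ = 45*C - ED2 := by
    rw [T4, eval4, hED2']; ring
  have hfr2 : ∫ ω, (Int.fract (S ω))^2 ∂μ = ED2 - 81*C/2 := by
    rw [T5, eval5, hED2']; ring
  -- rewrite hcor
  rw [hfr, hDfr, hfr2] at hcor
  have hnum : (45*C - ED2) - ED*(9*C - ED) = 45*C - VarD - 9*C*ED := by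
    rw [hVarD]; ring
  have hden : VarD * ((ED2 - 81*C/2) - (9*C - ED)^2)
      = VarD * (VarD + 18*C*ED - 81*C*(C + 1/2)) := by
    rw [hVarD]; ring
  rw [hnum, hden] at hcor
  refine ⟨hcor, ?_⟩
  -- positivity
  obtain ⟨h3l, h3u⟩ := log3_bounds
  obtain ⟨h5l, h5u⟩ := log5_bounds
  obtain ⟨h7l, h7u⟩ := log7_bounds
  have h2l : (0.6931471803 : ℝ) < l2 := Real.log_two_gt_d9
  have h2u : l2 < 0.6931471808 := Real.log_two_lt_d9
  have hLne : (l2 + l5) ≠ 0 := hLpos.ne'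
  have key0 : VarD * (l2 + l5)^2
      = (8*l2 - 50*l3 + 72*l5 - 13*l7) * (l2 + l5) - (2*l2 - 4*l3 + 8*l5 - l7)^2 := by
    rw [hVarD, hED2', hED', hC']
    field_simp
  have key1 : (45*C - VarD - 9*C*ED) * (l2 + l5)^2
      = 45*(l2 + l5) - ((8*l2 - 50*l3 + 72*l5 - 13*l7) * (l2 + l5)
          - (2*l2 - 4*l3 + 8*l5 - l7)^2) - 9*(2*l2 - 4*l3 + 8*l5 - l7) := by
    rw [hVarD, hED2', hED', hC']
    field_simp
  have key2 : (VarD + 18*C*ED - 81*C*(C + 1/2)) * (l2 + l5)^2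
      = ((8*l2 - 50*l3 + 72*l5 - 13*l7) * (l2 + l5) - (2*l2 - 4*l3 + 8*l5 - l7)^2)
          + 18*(2*l2 - 4*l3 + 8*l5 - l7) - 81 - 81*(l2 + l5)/2 := by
    rw [hVarD, hED2', hED', hC']
    field_simp
    ring
  have hsq : 0 < (l2 + l5)^2 := by positivity
  have hVarDpos : 0 < VarD :=
    pos_cancel hsq (by rw [key0]; exact pos3 l2 l3 l5 l7 h2l h2u h3l h3u h5l h5u h7l h7u)
  have hnumpos : 0 < 45*C - VarD - 9*C*ED :=
    pos_cancel hsq (by rw [key1]; exact pos1 l2 l3 l5 l7 h2l h2u h3l h3u h5l h5u h7l h7u)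
  have hv2pos : 0 < VarD + 18*C*ED - 81*C*(C + 1/2) :=
    pos_cancel hsq (by rw [key2]; exact pos2 l2 l3 l5 l7 h2l h2u h3l h3u h5l h5u h7l h7u)
  rw [hcor]
  exact div_pos hnumpos (Real.sqrt_pos.2 (mul_pos hVarDpos hv2pos))
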